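/- arXiv:1001.2916 — 2 statements merged into one kernel-verified Lean document; each statement's English description precedes it below -/
import Mathlib

section
/- Let α>0 and ε>0. Let Z be a nonnegative random variable with P(Z>z)=z^{-α}ℓ(z) for all z>0, where ℓ is slowly varying at infinity. Let σ:ℝ→[0,∞) be measurable and let X be a random variable independent of Z with E[σ(X)^{α+ε}]<∞. Let (u_n) be a sequence with u_n→∞ and define G_n(x,s)=P(σ(x)Z>(1+s)u_n)/P(Z>u_n) for x∈ℝ, s≥0, and T(s)=(1+s)^{-α}. Then for every p≥1 such that pα<α+ε, lim_{n→∞} E[ sup_{s≥0} |G_n(X,s) − σ(X)^α T(s)|^p ] = 0. -/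
open MeasureTheory ProbabilityTheory Filter

noncomputable section

/-- A measurable function `ℓ : (0,∞) → (0,∞)` is slowly varying at infinity if
`ℓ(tx)/ℓ(t) → 1` as `t → ∞` for every `x > 0`. -/
def SlowlyVarying (ℓ : ℝ → ℝ) : Prop :=
  Measurable ℓ ∧ (∀ t > 0, 0 < ℓ t) ∧
    ∀ x > (0:ℝ), Tendsto (fun t => ℓ (t * x) / ℓ t) atTop (nhds 1)


private lemma rpow_sum_le (p : ℝ) (hp : 0 ≤ p) {a b : ℝ} (ha : 0 ≤ a) (hb : 0 ≤ b) :
    (a + b) ^ p ≤ 2 ^ p * (a ^ p + b ^ p) := by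
  have h1 : a + b ≤ 2 * max a b := by
    rcases max_cases a b with ⟨h, h'⟩ | ⟨h, h'⟩ <;> rw [h] <;> linarith
  have h2 : (a + b) ^ p ≤ (2 * max a b) ^ p :=
    Real.rpow_le_rpow (by linarith) h1 hp
  have h3 : (2 * max a b : ℝ) ^ p = 2 ^ p * (max a b) ^ p :=
    Real.mul_rpow (by norm_num) (le_max_of_le_left ha)
  have h4 : (max a b) ^ p ≤ a ^ p + b ^ p := by
    rcases max_cases a b with ⟨h, _⟩ | ⟨h, _⟩ <;> rw [h]
    · nlinarith [Real.rpow_nonneg hb p]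
    · nlinarith [Real.rpow_nonneg ha p]
  calc (a + b) ^ p ≤ 2 ^ p * (max a b) ^ p := by rw [← h3]; exact h2
    _ ≤ 2 ^ p * (a ^ p + b ^ p) := by
        have : (0:ℝ) ≤ 2 ^ p := Real.rpow_nonneg (by norm_num) p
        nlinarith

private lemma rpow_le_one_add (r q y : ℝ) (h0 : 0 ≤ q) (hq : q ≤ r) (hy : 0 ≤ y) :
    y ^ q ≤ 1 + y ^ r := by
  rcases le_or_gt y 1 with h | h
  · have : y ^ q ≤ 1 := Real.rpow_le_one hy h h0
    have : (0:ℝ) ≤ y ^ r := Real.rpow_nonneg hy r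
    linarith
  · have : y ^ q ≤ y ^ r := Real.rpow_le_rpow_of_exponent_le h.le hq
    linarith

private lemma exists_pow_two_bounds {y : ℝ} (hy : 1 ≤ y) :
    ∃ k : ℕ, y ≤ 2 ^ k ∧ (2:ℝ) ^ k ≤ 2 * y := by
  have hy0 : 0 < y := by linarith
  have hlb : 0 ≤ Real.logb 2 y := Real.logb_nonneg (by norm_num) hy
  refine ⟨⌈Real.logb 2 y⌉₊, ?_, ?_⟩
  · have h1 : (2:ℝ) ^ (Real.logb 2 y) ≤ 2 ^ ((⌈Real.logb 2 y⌉₊ : ℝ)) :=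
      Real.rpow_le_rpow_of_exponent_le (by norm_num) (Nat.le_ceil _)
    rw [Real.rpow_logb (by norm_num) (by norm_num) hy0] at h1
    rwa [Real.rpow_natCast] at h1
  · have h2 : ((⌈Real.logb 2 y⌉₊ : ℝ)) ≤ Real.logb 2 y + 1 := by
      have := Nat.ceil_lt_add_one hlb
      linarith
    have h3 : (2:ℝ) ^ ((⌈Real.logb 2 y⌉₊ : ℝ)) ≤ 2 ^ (Real.logb 2 y + 1) :=
      Real.rpow_le_rpow_of_exponent_le (by norm_num) h2
    rw [Real.rpow_add (by norm_num), Real.rpow_logb (by norm_num) (by norm_num) hy0,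
      Real.rpow_one] at h3
    rw [Real.rpow_natCast] at h3
    linarith

private lemma chain_up (g : ℝ → ℝ) (t₀ B : ℝ) (hB : 0 ≤ B) (ht₀ : 0 ≤ t₀)
    (h : ∀ s, t₀ ≤ s → g s ≤ B * g (2 * s)) :
    ∀ k : ℕ, ∀ s, t₀ ≤ s → g s ≤ B ^ k * g (2 ^ k * s) := by
  intro k
  induction k with
  | zero => intro s hs; simp
  | succ k ih =>

    intro s hs
    have hs0 : 0 ≤ s := le_trans ht₀ hs
    have h2s : t₀ ≤ 2 * s := by linarith
    calc g s ≤ B * g (2 * s) := h s hs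
      _ ≤ B * (B ^ k * g (2 ^ k * (2 * s))) :=
          mul_le_mul_of_nonneg_left (ih (2 * s) h2s) hB
      _ = B ^ (k+1) * g (2 ^ (k+1) * s) := by ring_nf

private lemma chain_down (g : ℝ → ℝ) (t₀ B : ℝ) (hB : 0 ≤ B) (ht₀ : 0 < t₀)
    (h : ∀ s, t₀ ≤ s → B * g s ≤ g (2 * s)) :
    ∀ k : ℕ, B ^ k * g t₀ ≤ g (2 ^ k * t₀) := by
  intro k
  induction k with
  | zero => simp
  | succ k ih =>
    have hk : (1:ℝ) ≤ 2 ^ k := one_le_pow₀ (by norm_num)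
    have hs : t₀ ≤ 2 ^ k * t₀ := le_mul_of_one_le_left ht₀.le hk
    calc B ^ (k+1) * g t₀ = B * (B ^ k * g t₀) := by ring
      _ ≤ B * g (2 ^ k * t₀) := mul_le_mul_of_nonneg_left ih hB
      _ ≤ g (2 * (2 ^ k * t₀)) := h _ hs
      _ = g (2 ^ (k+1) * t₀) := by ring_nf

private lemma unif_conv (α : ℝ) (hα : 0 < α) (g : ℝ → ℝ)
    (hg : Antitone g) (hg0 : ∀ z, 0 ≤ g z) (hgpos : ∀ z, 0 < z → 0 < g z)
    (hpt : ∀ x, 0 < x → Tendsto (fun t => g (t * x) / g t) atTop (nhds (x ^ (-α))))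
    (c : ℝ) (hc : 0 < c) (ε : ℝ) (hε : 0 < ε) :
    ∀ᶠ t : ℝ in atTop, ∀ x, c ≤ x → |g (t * x) / g t - x ^ (-α)| ≤ ε := by
  classical
  have hcα : (0:ℝ) < c ^ α := Real.rpow_pos_of_pos hc α
  set q : ℝ := (1 + ε/2 * c ^ α) ^ (α⁻¹) with hqdef
  have hbase : (1:ℝ) < 1 + ε/2 * c ^ α := by nlinarith
  have hq1 : 1 < q := Real.one_lt_rpow_iff_of_pos (by linarith) |>.mpr
    (Or.inl ⟨hbase, by positivity⟩)
  have hq0 : 0 < q := lt_trans one_pos hq1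
  have hqα : q ^ α = 1 + ε/2 * c ^ α := by
    rw [hqdef, ← Real.rpow_mul (by linarith : (0:ℝ) ≤ 1 + ε/2 * c ^ α),
      inv_mul_cancel₀ hα.ne', Real.rpow_one]
  -- grid points
  set Λ : ℕ → ℝ := fun i => c * q ^ i with hΛdef
  have hΛpos : ∀ i, 0 < Λ i := fun i => mul_pos hc (pow_pos hq0 i)
  have hΛc : ∀ i, c ≤ Λ i := fun i =>
    le_mul_of_one_le_right hc.le (one_le_pow₀ hq1.le)
  have hΛmono : ∀ i, Λ i ≤ Λ (i+1) := by
    intro i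
    have : (q:ℝ) ^ i ≤ q ^ (i+1) := pow_le_pow_right₀ hq1.le (by omega)
    exact mul_le_mul_of_nonneg_left this hc.le
  -- rpow facts about grid
  have hanti : ∀ a b : ℝ, 0 < a → a ≤ b → b ^ (-α) ≤ a ^ (-α) := by
    intro a b ha hab
    exact Real.rpow_le_rpow_of_nonpos ha hab (by linarith)
  have hΛf_le : ∀ i, (Λ i) ^ (-α) ≤ c ^ (-α) := fun i => hanti c (Λ i) hc (hΛc i)
  have hstep : ∀ i, (Λ i) ^ (-α) = q ^ α * (Λ (i+1)) ^ (-α) := by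
    intro i
    have h1 : Λ (i+1) = Λ i * q := by rw [hΛdef]; ring
    rw [h1, Real.mul_rpow (hΛpos i).le hq0.le, Real.rpow_neg hq0.le]
    have : q ^ α * (q ^ α)⁻¹ = 1 := mul_inv_cancel₀ (Real.rpow_pos_of_pos hq0 α).ne'
    field_simp
  have hstep' : ∀ i, (Λ i) ^ (-α) - (Λ (i+1)) ^ (-α) ≤ ε / 2 := by
    intro i
    have h2 : (Λ (i+1)) ^ (-α) ≤ c ^ (-α) := hΛf_le (i+1)
    have h3 : (0:ℝ) ≤ (Λ (i+1)) ^ (-α) := Real.rpow_nonneg (hΛpos (i+1)).le _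
    have h4 : c ^ α * c ^ (-α) = 1 := by
      rw [← Real.rpow_add hc]; simp
    have h5 : (Λ i) ^ (-α) - (Λ (i+1)) ^ (-α) = (q ^ α - 1) * (Λ (i+1)) ^ (-α) := by
      rw [hstep i]; ring
    rw [h5, hqα]
    have h6 : (1 + ε / 2 * c ^ α - 1) = ε/2 * c ^ α := by ring
    rw [h6]
    calc ε/2 * c ^ α * (Λ (i+1)) ^ (-α) ≤ ε/2 * c ^ α * c ^ (-α) := by
          apply mul_le_mul_of_nonneg_left h2 (by positivity)
      _ = ε/2 := by rw [mul_assoc, h4, mul_one]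
  -- choose N
  have hΛtop : Tendsto (fun i : ℕ => Λ i) atTop atTop := by
    exact Tendsto.const_mul_atTop hc (tendsto_pow_atTop_atTop_of_one_lt hq1)
  have htend0 : Tendsto (fun i : ℕ => (Λ i) ^ (-α)) atTop (nhds 0) :=
    (tendsto_rpow_neg_atTop hα).comp hΛtop
  obtain ⟨N, hN⟩ := (htend0.eventually (eventually_le_nhds (by linarith : (0:ℝ) < ε/2))).exists
  -- eventual closeness at grid points
  have hev : ∀ᶠ t : ℝ in atTop,
      ∀ i ∈ Finset.range (N+1), |g (t * Λ i) / g t - (Λ i) ^ (-α)| ≤ ε / 2 := by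
    rw [eventually_all_finset]
    intro i _
    have := (hpt (Λ i) (hΛpos i)).eventually (Metric.closedBall_mem_nhds ((Λ i) ^ (-α)) (by linarith : (0:ℝ) < ε/2))
    filter_upwards [this] with t ht
    simpa [Metric.mem_closedBall, Real.dist_eq] using ht
  filter_upwards [hev, eventually_ge_atTop (1:ℝ)] with t ht ht1
  intro x hx
  have ht0 : (0:ℝ) < t := lt_of_lt_of_le one_pos ht1
  have hgt : 0 < g t := hgpos t ht0
  have hx0 : 0 < x := lt_of_lt_of_le hc hx
  set r : ℝ → ℝ := fun y => g (t * y) / g t with hrdef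
  have hrmono : ∀ y y' : ℝ, y ≤ y' → r y' ≤ r y := by
    intro y y' hyy
    exact (div_le_div_iff_of_pos_right hgt).mpr (hg (by nlinarith))
  have hr0 : ∀ y, 0 ≤ r y := fun y => div_nonneg (hg0 _) hgt.le
  rcases le_or_gt (Λ N) x with hcase | hcase
  · -- tail region
    have h1 : r x ≤ r (Λ N) := hrmono (Λ N) x hcase
    have h2 : |r (Λ N) - (Λ N) ^ (-α)| ≤ ε/2 := ht N (Finset.self_mem_range_succ N)
    have h3 : (Λ N) ^ (-α) ≤ ε/2 := hN
    have h4 : x ^ (-α) ≤ (Λ N) ^ (-α) := hanti (Λ N) x (hΛpos N) hcase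
    have h5 : (0:ℝ) ≤ x ^ (-α) := Real.rpow_nonneg hx0.le _
    have := abs_le.mp h2
    rw [abs_le]
    constructor <;> [skip; skip] <;> nlinarith [hr0 x]
  · -- grid region
    set i := Nat.findGreatest (fun j => Λ j ≤ x) N with hidef
    have hPi : Λ i ≤ x := by
      exact Nat.findGreatest_spec (P := fun j => Λ j ≤ x) (Nat.zero_le N)
        (by simpa [hΛdef] using hx)
    have hiN : i ≤ N := Nat.findGreatest_le N
    have hilt : i < N := by
      rcases lt_or_eq_of_le hiN with h | h
      · exact h
      · exfalso; rw [h] at hPi; linarith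
    have hPi1 : x ≤ Λ (i+1) := by
      have := Nat.findGreatest_is_greatest (Nat.lt_succ_self i) (by omega)
      push_neg at this
      exact this.le
    have e1 : |r (Λ i) - (Λ i) ^ (-α)| ≤ ε/2 := ht i (Finset.mem_range.mpr (by omega))
    have e2 : |r (Λ (i+1)) - (Λ (i+1)) ^ (-α)| ≤ ε/2 :=
      ht (i+1) (Finset.mem_range.mpr (by omega))
    have m1 : r x ≤ r (Λ i) := hrmono (Λ i) x hPi
    have m2 : r (Λ (i+1)) ≤ r x := hrmono x (Λ (i+1)) hPi1
    have f1 : x ^ (-α) ≤ (Λ i) ^ (-α) := hanti (Λ i) x (hΛpos i) hPi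
    have f2 : (Λ (i+1)) ^ (-α) ≤ x ^ (-α) := hanti x (Λ (i+1)) hx0 hPi1
    have hs := hstep' i
    have e1' := abs_le.mp e1
    have e2' := abs_le.mp e2
    rw [abs_le]
    constructor <;> nlinarith
private noncomputable def Gf (g : ℝ → ℝ) (t y s : ℝ) : ℝ :=
  if 0 < y then g ((1+s)*t/y) / g t else 0

private noncomputable def Bf (g : ℝ → ℝ) (α t y s : ℝ) : ℝ :=
  Gf g t y s - y ^ α * (1+s) ^ (-α)

private noncomputable def Ef (g : ℝ → ℝ) (α t y : ℝ) : ℝ :=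
  ⨆ s : {s : ℝ // 0 ≤ s}, |Bf g α t y (s:ℝ)|

section EfLemmas

variable {α : ℝ} {g : ℝ → ℝ}

private lemma Gf_nonneg (hg0 : ∀ z, 0 ≤ g z) (hgpos : ∀ z, 0 < z → 0 < g z)
    {t : ℝ} (ht : 0 < t) (y s : ℝ) : 0 ≤ Gf g t y s := by
  unfold Gf
  split_ifs
  · exact div_nonneg (hg0 _) (hgpos t ht).le
  · exact le_refl 0

private lemma Gf_le (hg1 : ∀ z, g z ≤ 1) (hgpos : ∀ z, 0 < z → 0 < g z)
    {t : ℝ} (ht : 0 < t) (y s : ℝ) : Gf g t y s ≤ 1 / g t := by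
  unfold Gf
  have hgt := hgpos t ht
  split_ifs
  · exact (div_le_div_iff_of_pos_right hgt).mpr (hg1 _)
  · positivity

private lemma Gf_le2 (hganti : Antitone g) (hgpos : ∀ z, 0 < z → 0 < g z)
    {t y s : ℝ} (ht : 0 < t) (hy : 0 < y) (hs : 0 ≤ s) :
    Gf g t y s ≤ g (t / y) / g t := by
  unfold Gf
  rw [if_pos hy]
  apply (div_le_div_iff_of_pos_right (hgpos t ht)).mpr
  apply hganti
  rw [div_le_div_iff_of_pos_right hy]
  nlinarith

private lemma Bf_abs_le (hα : 0 < α) (hg0 : ∀ z, 0 ≤ g z) (hg1 : ∀ z, g z ≤ 1)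
    (hgpos : ∀ z, 0 < z → 0 < g z)
    {t y s : ℝ} (ht : 0 < t) (hy : 0 ≤ y) (hs : 0 ≤ s) :
    |Bf g α t y s| ≤ 1 / g t + y ^ α := by
  have h1 := Gf_nonneg hg0 hgpos ht y s
  have h2 := Gf_le hg1 hgpos ht y s
  have h3 : 0 ≤ y ^ α * (1+s) ^ (-α) :=
    mul_nonneg (Real.rpow_nonneg hy _) (Real.rpow_nonneg (by linarith) _)
  have h4 : y ^ α * (1+s) ^ (-α) ≤ y ^ α := by
    have h5 : (1+s) ^ (-α) ≤ 1 :=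
      Real.rpow_le_one_of_one_le_of_nonpos (by linarith) (by linarith)
    nlinarith [Real.rpow_nonneg hy α]
  unfold Bf
  rw [abs_le]
  constructor <;> nlinarith

private lemma Bf_bdd (hα : 0 < α) (hg0 : ∀ z, 0 ≤ g z) (hg1 : ∀ z, g z ≤ 1)
    (hgpos : ∀ z, 0 < z → 0 < g z)
    {t y : ℝ} (ht : 0 < t) (hy : 0 ≤ y) :
    BddAbove (Set.range fun s : {s : ℝ // 0 ≤ s} => |Bf g α t y (s:ℝ)|) := by
  refine ⟨1 / g t + y ^ α, ?_⟩
  rintro _ ⟨s, rfl⟩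
  exact Bf_abs_le hα hg0 hg1 hgpos ht hy s.2

private lemma Ef_nonneg (hα : 0 < α) (hg0 : ∀ z, 0 ≤ g z) (hg1 : ∀ z, g z ≤ 1)
    (hgpos : ∀ z, 0 < z → 0 < g z)
    {t y : ℝ} (ht : 0 < t) (hy : 0 ≤ y) : 0 ≤ Ef g α t y :=
  le_trans (abs_nonneg _)
    (le_ciSup (Bf_bdd hα hg0 hg1 hgpos ht hy) (⟨0, le_refl 0⟩ : {s : ℝ // 0 ≤ s}))

private lemma Ef_le (hα : 0 < α) (hg0 : ∀ z, 0 ≤ g z) (hg1 : ∀ z, g z ≤ 1)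
    (hgpos : ∀ z, 0 < z → 0 < g z)
    {t y : ℝ} (ht : 0 < t) (hy : 0 ≤ y) : Ef g α t y ≤ 1 / g t + y ^ α :=
  ciSup_le fun s => Bf_abs_le hα hg0 hg1 hgpos ht hy s.2

private lemma Ef_le2 (hg0 : ∀ z, 0 ≤ g z) (hganti : Antitone g)
    (hgpos : ∀ z, 0 < z → 0 < g z)
    {t y : ℝ} (ht : 0 < t) (hy : 0 < y) (hα : 0 < α) :
    Ef g α t y ≤ g (t / y) / g t + y ^ α := by
  apply ciSup_le
  intro s
  have h1 := Gf_nonneg hg0 hgpos ht y (s:ℝ)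
  have h2 := Gf_le2 hganti hgpos ht hy s.2
  have h3 : 0 ≤ y ^ α * (1+(s:ℝ)) ^ (-α) :=
    mul_nonneg (Real.rpow_nonneg hy.le _) (Real.rpow_nonneg (by linarith [s.2]) _)
  have h4 : y ^ α * (1+(s:ℝ)) ^ (-α) ≤ y ^ α := by
    have h5 : (1+(s:ℝ)) ^ (-α) ≤ 1 :=
      Real.rpow_le_one_of_one_le_of_nonpos (by linarith [s.2]) (by linarith)
    nlinarith [Real.rpow_nonneg hy.le α]
  unfold Bf
  rw [abs_le]
  constructor <;> nlinarith

private lemma Ef_zero (hα : 0 < α) (t : ℝ) : Ef g α t 0 = 0 := by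
  unfold Ef
  have h : ∀ s : {s : ℝ // 0 ≤ s}, |Bf g α t (0:ℝ) (s:ℝ)| = 0 := by
    intro s
    unfold Bf Gf
    rw [if_neg (lt_irrefl 0), Real.zero_rpow hα.ne']
    simp
  simp only [h]
  exact ciSup_const

private lemma Ef_mono (hα : 0 < α) (hg0 : ∀ z, 0 ≤ g z) (hg1 : ∀ z, g z ≤ 1)
    (hgpos : ∀ z, 0 < z → 0 < g z)
    {t y y' : ℝ} (ht : 0 < t) (hy : 0 ≤ y) (hyy : y ≤ y') :
    Ef g α t y ≤ Ef g α t y' := by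
  rcases eq_or_lt_of_le hy with h0 | h0
  · rw [← h0, Ef_zero hα]
    exact Ef_nonneg hα hg0 hg1 hgpos ht (by linarith)
  · have hy' : 0 < y' := lt_of_lt_of_le h0 hyy
    apply ciSup_le
    intro s
    have h1s : (1:ℝ) ≤ 1 + (s:ℝ) := by linarith [s.2]
    set s' : ℝ := (1 + (s:ℝ)) * y' / y - 1 with hs'def
    have hs'0 : 0 ≤ s' := by
      rw [hs'def]
      have h2 : (1:ℝ) ≤ (1 + (s:ℝ)) * y' / y := by
        rw [le_div_iff₀ h0]
        nlinarith
      linarith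
    have key : |Bf g α t y (s:ℝ)| = |Bf g α t y' s'| := by
      have e1 : 1 + s' = (1 + (s:ℝ)) * y' / y := by rw [hs'def]; ring
      have e2 : (1 + s') * t / y' = (1 + (s:ℝ)) * t / y := by
        rw [e1]; field_simp
      have h1s0 : (0:ℝ) < 1 + (s:ℝ) := by linarith
      have e3 : y' ^ α * (1 + s') ^ (-α) = y ^ α * (1 + (s:ℝ)) ^ (-α) := by
        rw [e1, Real.div_rpow (by positivity) h0.le,
          Real.mul_rpow h1s0.le hy'.le]
        rw [Real.rpow_neg hy'.le, Real.rpow_neg h0.le]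
        have ha : y' ^ α ≠ 0 := (Real.rpow_pos_of_pos hy' α).ne'
        have hcne : y ^ α ≠ 0 := (Real.rpow_pos_of_pos h0 α).ne'
        field_simp
      unfold Bf Gf
      rw [if_pos h0, if_pos hy', e2, e3]
    rw [key]
    exact le_ciSup (Bf_bdd hα hg0 hg1 hgpos ht hy'.le) (⟨s', hs'0⟩ : {s : ℝ // 0 ≤ s})

private lemma Ef_tendsto (hα : 0 < α) (hg0 : ∀ z, 0 ≤ g z) (hg1 : ∀ z, g z ≤ 1)
    (hganti : Antitone g) (hgpos : ∀ z, 0 < z → 0 < g z)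
    (hpt : ∀ x, 0 < x → Tendsto (fun t => g (t * x) / g t) atTop (nhds (x ^ (-α))))
    {y : ℝ} (hy : 0 ≤ y) :
    Tendsto (fun t => Ef g α t y) atTop (nhds 0) := by
  rcases eq_or_lt_of_le hy with h0 | h0
  · have : (fun t => Ef g α t y) = fun _ => 0 := by
      funext t; rw [← h0, Ef_zero hα]
    rw [this]
    exact tendsto_const_nhds
  · rw [Metric.tendsto_nhds]
    intro ε' hε'
    have huc := unif_conv α hα g hganti hg0 hgpos hpt (1/y) (by positivity)
      (ε'/2) (by linarith)
    filter_upwards [huc, eventually_ge_atTop (1:ℝ)] with t hut ht1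
    have ht0 : (0:ℝ) < t := lt_of_lt_of_le one_pos ht1
    have hle : Ef g α t y ≤ ε'/2 := by
      apply ciSup_le
      intro s
      have h1s : (1:ℝ) ≤ 1 + (s:ℝ) := by linarith [s.2]
      have hlam : (1/y : ℝ) ≤ (1 + (s:ℝ))/y :=
        (div_le_div_iff_of_pos_right h0).mpr h1s
      have hth := hut ((1 + (s:ℝ))/y) hlam
      have e2 : t * ((1 + (s:ℝ))/y) = (1 + (s:ℝ)) * t / y := by ring
      have e3 : ((1 + (s:ℝ))/y) ^ (-α) = y ^ α * (1 + (s:ℝ)) ^ (-α) := by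
        rw [Real.div_rpow (by linarith) h0.le, div_eq_mul_inv,
          Real.rpow_neg h0.le α, inv_inv, mul_comm]
      rw [e2, e3] at hth
      unfold Bf Gf
      rw [if_pos h0]
      exact hth
    rw [Real.dist_eq, sub_zero,
      abs_of_nonneg (Ef_nonneg hα hg0 hg1 hgpos ht0 hy)]
    linarith

end EfLemmas

set_option maxHeartbeats 1000000 in
/-- Uniform-in-`s` `L^p` convergence of `G_n(X,s) = P(σ(X)Z > (1+s)u_n)/P(Z > u_n)` to
`σ(X)^α T(s)`, where `T(s) = (1+s)^{-α}`, for an r.v. `X` independent of `Z`, when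
`Z` has a regularly varying tail with index `-α` and `E[σ(X)^{α+ε}] < ∞`. -/
theorem stmt_0 (α ε : ℝ) (hα : 0 < α) (hε : 0 < ε)
    {Ω : Type*} [MeasurableSpace Ω] (P : Measure Ω) [IsProbabilityMeasure P]
    (Z : Ω → ℝ) (hZmeas : Measurable Z) (hZnn : ∀ ω, 0 ≤ Z ω)
    (ℓ : ℝ → ℝ) (hℓ : SlowlyVarying ℓ)
    (htail : ∀ z > (0:ℝ), (P {ω | Z ω > z}).toReal = z ^ (-α) * ℓ z)
    (σ : ℝ → ℝ) (hσmeas : Measurable σ) (hσnn : ∀ x, 0 ≤ σ x)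
    (X : Ω → ℝ) (hXmeas : Measurable X) (hindep : IndepFun X Z P)
    (hmom : Integrable (fun ω => σ (X ω) ^ (α + ε)) P)
    (u : ℕ → ℝ) (hu : Tendsto u atTop atTop)
    (Gn : ℕ → ℝ → ℝ → ℝ)
    (hGn : ∀ n x s, Gn n x s
      = (P {ω | σ x * Z ω > (1 + s) * u n}).toReal / (P {ω | Z ω > u n}).toReal)
    (T : ℝ → ℝ) (hT : ∀ s, T s = (1 + s) ^ (-α))
    (p : ℝ) (hp : 1 ≤ p) (hpα : p * α < α + ε) :
    Tendsto
      (fun n => ∫ ω, (⨆ s : {s : ℝ // 0 ≤ s},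
        |Gn n (X ω) (s : ℝ) - σ (X ω) ^ α * T (s : ℝ)| ^ p) ∂P)
      atTop (nhds 0) := by
  classical
  haveI : Nonempty {s : ℝ // 0 ≤ s} := ⟨⟨0, le_refl 0⟩⟩
  obtain ⟨hℓmeas, hℓpos, hℓslow⟩ := hℓ
  have hp0 : (0:ℝ) < p := lt_of_lt_of_le one_pos hp
  set δ : ℝ := (α + ε - p * α) / (2 * p) with hδdef
  have hδ : 0 < δ := div_pos (by linarith) (by linarith)
  have hpδ2 : 2 * (p * δ) = α + ε - p * α := by
    rw [hδdef]; field_simp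
  have hpδ : p * (α + δ) ≤ α + ε := by nlinarith
  have hαδ : 0 < α + δ := by linarith
  -- tail function of Z
  set g : ℝ → ℝ := fun z => (P {ω | Z ω > z}).toReal with hgdef
  have hganti : Antitone g := by
    intro z z' hzz
    exact ENNReal.toReal_mono (measure_ne_top _ _)
      (measure_mono (fun ω hω => lt_of_le_of_lt hzz hω))
  have hg0 : ∀ z, 0 ≤ g z := fun z => ENNReal.toReal_nonneg
  have hg1 : ∀ z, g z ≤ 1 := by
    intro z
    have h := prob_le_one (μ := P) (s := {ω | Z ω > z})
    have h2 := ENNReal.toReal_mono (by norm_num) h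
    simpa using h2
  have hgpos : ∀ z, 0 < z → 0 < g z := by
    intro z hz
    have h0 : g z = z ^ (-α) * ℓ z := htail z hz
    rw [h0]
    have h1 := hℓpos z hz
    have h2 : (0:ℝ) < z ^ (-α) := Real.rpow_pos_of_pos hz _
    positivity
  have hratio : ∀ x, 0 < x →
      Tendsto (fun t => g (t * x) / g t) atTop (nhds (x ^ (-α))) := by
    intro x hx
    have h1 : Tendsto (fun t => x ^ (-α) * (ℓ (t * x) / ℓ t)) atTop
        (nhds (x ^ (-α) * 1)) := (hℓslow x hx).const_mul _
    rw [mul_one] at h1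
    apply h1.congr'
    filter_upwards [eventually_gt_atTop (0:ℝ)] with t ht
    have htx : 0 < t * x := mul_pos ht hx
    have e1 : g (t * x) = (t*x) ^ (-α) * ℓ (t*x) := htail _ htx
    have e2 : g t = t ^ (-α) * ℓ t := htail _ ht
    rw [e1, e2, Real.mul_rpow ht.le hx.le]
    have hl : ℓ t ≠ 0 := (hℓpos t ht).ne'
    have htα : t ^ (-α) ≠ 0 := (Real.rpow_pos_of_pos ht _).ne'
    field_simp
  -- doubling estimate
  have hdoubling : ∃ t₀ : ℝ, 1 ≤ t₀ ∧ ∀ s, t₀ ≤ s → 2 ^ (-(α+δ)) * g s ≤ g (2 * s) := by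
    have h2 := hratio 2 (by norm_num)
    have hlt : (2:ℝ) ^ (-(α+δ)) < 2 ^ (-α) :=
      Real.rpow_lt_rpow_of_exponent_lt (by norm_num) (by linarith)
    have hev := h2.eventually (eventually_gt_nhds hlt)
    obtain ⟨a, ha⟩ := eventually_atTop.mp (hev.and (eventually_ge_atTop (1:ℝ)))
    refine ⟨max a 1, le_max_right _ _, ?_⟩
    intro s hs
    have h := ha s (le_trans (le_max_left a 1) hs)
    have hs0 : (0:ℝ) < s := lt_of_lt_of_le one_pos (le_trans (le_max_right a 1) hs)
    have hgs : 0 < g s := hgpos s hs0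
    have h3 : 2 ^ (-(α+δ)) < g (s * 2) / g s := h.1
    have h4 := (lt_div_iff₀ hgs).mp h3
    rw [mul_comm s 2] at h4
    linarith
  obtain ⟨t₀, ht₀1, ht₀d⟩ := hdoubling
  have ht₀0 : (0:ℝ) < t₀ := lt_of_lt_of_le one_pos ht₀1
  have hBp : (0:ℝ) < 2 ^ (α+δ) := Real.rpow_pos_of_pos two_pos _
  have hBBinv : (2:ℝ) ^ (α+δ) * 2 ^ (-(α+δ)) = 1 := by
    rw [← Real.rpow_add two_pos, show α + δ + -(α+δ) = 0 from by ring, Real.rpow_zero]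
  have hup : ∀ s, t₀ ≤ s → g s ≤ 2 ^ (α+δ) * g (2*s) := by
    intro s hs
    have h := ht₀d s hs
    calc g s = (2 ^ (α+δ) * 2 ^ (-(α+δ))) * g s := by rw [hBBinv, one_mul]
      _ = 2 ^ (α+δ) * (2 ^ (-(α+δ)) * g s) := by ring
      _ ≤ 2 ^ (α+δ) * g (2*s) := mul_le_mul_of_nonneg_left h hBp.le
  have hpotter : ∀ t y, 1 ≤ y → t₀ * y ≤ t → g (t / y) ≤ (2*y) ^ (α+δ) * g t := by
    intro t y hy1 hty
    have hy0 : 0 < y := lt_of_lt_of_le one_pos hy1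
    have ht0 : 0 < t := lt_of_lt_of_le (by positivity) hty
    obtain ⟨k, hk1, hk2⟩ := exists_pow_two_bounds hy1
    have hs : t₀ ≤ t / y := (le_div_iff₀ hy0).mpr hty
    have hcu := chain_up g t₀ (2 ^ (α+δ)) hBp.le ht₀0.le hup k (t/y) hs
    have hmono : g (2 ^ k * (t / y)) ≤ g t := by
      apply hganti
      calc t = y * (t/y) := by field_simp
        _ ≤ 2^k * (t/y) := mul_le_mul_of_nonneg_right hk1 (by positivity)
    have hpow : ((2:ℝ) ^ (α+δ)) ^ k ≤ (2*y) ^ (α+δ) := by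
      have e : ((2:ℝ) ^ (α+δ)) ^ k = ((2:ℝ) ^ k : ℝ) ^ (α+δ) := by
        rw [← Real.rpow_natCast ((2:ℝ) ^ (α+δ)) k, ← Real.rpow_mul (by norm_num),
          mul_comm, Real.rpow_mul (by norm_num), Real.rpow_natCast]
      rw [e]
      exact Real.rpow_le_rpow (by positivity) hk2 hαδ.le
    calc g (t/y) ≤ ((2:ℝ) ^ (α+δ))^k * g (2^k * (t/y)) := hcu
      _ ≤ ((2:ℝ) ^ (α+δ))^k * g t :=
          mul_le_mul_of_nonneg_left hmono (by positivity)
      _ ≤ (2*y)^(α+δ) * g t := mul_le_mul_of_nonneg_right hpow (hg0 t)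
  -- lower bound on g
  set c₁ : ℝ := g t₀ * (2/t₀) ^ (-(α+δ)) with hc₁def
  have hc₁0 : 0 < c₁ :=
    mul_pos (hgpos t₀ ht₀0) (Real.rpow_pos_of_pos (by positivity) _)
  have hglow : ∀ t, t₀ ≤ t → c₁ * t ^ (-(α+δ)) ≤ g t := by
    intro t ht
    have ht0 : 0 < t := lt_of_lt_of_le ht₀0 ht
    have hy1 : 1 ≤ t / t₀ := (one_le_div ht₀0).mpr ht
    obtain ⟨k, hk1, hk2⟩ := exists_pow_two_bounds hy1
    have hcd := chain_down g t₀ (2 ^ (-(α+δ))) (by positivity) ht₀0 ht₀d k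
    have hmono : g (2 ^ k * t₀) ≤ g t := by
      apply hganti
      calc t = (t/t₀) * t₀ := by field_simp
        _ ≤ 2^k * t₀ := mul_le_mul_of_nonneg_right hk1 ht₀0.le
    have hpow : (2*(t/t₀)) ^ (-(α+δ)) ≤ ((2:ℝ) ^ (-(α+δ))) ^ k := by
      have e : ((2:ℝ) ^ (-(α+δ))) ^ k = ((2:ℝ) ^ k : ℝ) ^ (-(α+δ)) := by
        rw [← Real.rpow_natCast ((2:ℝ) ^ (-(α+δ))) k, ← Real.rpow_mul (by norm_num),
          mul_comm, Real.rpow_mul (by norm_num), Real.rpow_natCast]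
      rw [e]
      exact Real.rpow_le_rpow_of_nonpos (by positivity) hk2 (by linarith)
    have efin : c₁ * t ^ (-(α+δ)) = g t₀ * (2*(t/t₀)) ^ (-(α+δ)) := by
      rw [hc₁def, mul_assoc, ← Real.mul_rpow (by positivity) ht0.le]
      congr 2
      ring
    rw [efin]
    calc g t₀ * (2*(t/t₀)) ^ (-(α+δ)) ≤ g t₀ * ((2:ℝ) ^ (-(α+δ)))^k :=
          mul_le_mul_of_nonneg_left hpow (hg0 t₀)
      _ = ((2:ℝ) ^ (-(α+δ)))^k * g t₀ := by ring
      _ ≤ g (2^k * t₀) := hcd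
      _ ≤ g t := hmono
  have hginv : ∀ t, t₀ ≤ t → 1 / g t ≤ c₁⁻¹ * t ^ (α+δ) := by
    intro t ht
    have ht0 : 0 < t := lt_of_lt_of_le ht₀0 ht
    have h1 := hglow t ht
    have h2 : (0:ℝ) < c₁ * t ^ (-(α+δ)) := by positivity
    have h4 := one_div_le_one_div_of_le h2 h1
    calc 1/g t ≤ 1/(c₁ * t^(-(α+δ))) := h4
      _ = c₁⁻¹ * t^(α+δ) := by
          rw [one_div, mul_inv, Real.rpow_neg ht0.le, inv_inv]
  -- rewrite Gn in terms of Gf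
  have hGneq : ∀ n (x : ℝ) (s : ℝ), 0 < u n → 0 ≤ s →
      Gn n x s = Gf g (u n) (σ x) s := by
    intro n x s hun hs
    have hc : 0 < (1+s) * u n := by nlinarith
    rw [hGn]
    rcases (hσnn x).lt_or_eq with hσx | hσx
    · unfold Gf
      rw [if_pos hσx]
      have hset : {ω | σ x * Z ω > (1+s) * u n} = {ω | Z ω > (1+s)*(u n)/(σ x)} := by
        ext ω
        simp only [Set.mem_setOf_eq, gt_iff_lt]
        rw [div_lt_iff₀ hσx, mul_comm (Z ω) (σ x)]
      rw [hset]
    · unfold Gf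
      rw [if_neg (by rw [← hσx]; exact lt_irrefl 0)]
      have hset : {ω | σ x * Z ω > (1+s) * u n} = (∅ : Set Ω) := by
        ext ω
        simp only [Set.mem_setOf_eq, gt_iff_lt, Set.mem_empty_iff_false, iff_false,
          not_lt]
        rw [← hσx, zero_mul]
        exact hc.le
      rw [hset]
      simp
  -- the function φ
  set φ : ℝ → ℝ := fun x => max x 0 ^ p with hφdef
  have hφcont : Continuous φ :=
    (continuous_id.max continuous_const).rpow_const (fun x => Or.inr hp0.le)
  have hφmono : Monotone φ := fun a b hab =>
    Real.rpow_le_rpow (le_max_right a 0) (max_le_max hab (le_refl 0)) hp0.le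
  have hφnn : ∀ x, 0 ≤ φ x := fun x => Real.rpow_nonneg (le_max_right x 0) p
  have hφeq : ∀ x, 0 ≤ x → φ x = x ^ p := by
    intro x hx
    simp only [hφdef]
    rw [max_eq_left hx]
  have hφ0 : φ 0 = 0 := by
    rw [hφeq 0 (le_refl 0), Real.zero_rpow hp0.ne']
  -- integrand identification
  have hI : ∀ n, 0 < u n → ∀ ω,
      (⨆ s : {s : ℝ // 0 ≤ s}, |Gn n (X ω) (s:ℝ) - σ (X ω) ^ α * T (s:ℝ)| ^ p)
        = φ (Ef g α (u n) (σ (X ω))) := by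
    intro n hun ω
    have h1 : ∀ s : {s : ℝ // 0 ≤ s},
        |Gn n (X ω) (s:ℝ) - σ (X ω) ^ α * T (s:ℝ)| ^ p
          = φ (|Bf g α (u n) (σ (X ω)) (s:ℝ)|) := by
      intro s
      rw [hφeq _ (abs_nonneg _)]
      congr 1
      rw [hGneq n (X ω) (s:ℝ) hun s.2, hT]
      rfl
    calc (⨆ s : {s : ℝ // 0 ≤ s}, |Gn n (X ω) (s:ℝ) - σ (X ω) ^ α * T (s:ℝ)| ^ p)
        = ⨆ s : {s : ℝ // 0 ≤ s}, φ (|Bf g α (u n) (σ (X ω)) (s:ℝ)|) := iSup_congr h1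
      _ = φ (⨆ s : {s : ℝ // 0 ≤ s}, |Bf g α (u n) (σ (X ω)) (s:ℝ)|) :=
          (Monotone.map_ciSup_of_continuousAt (hφcont.continuousAt) hφmono
            (Bf_bdd hα hg0 hg1 hgpos hun (hσnn _))).symm
      _ = φ (Ef g α (u n) (σ (X ω))) := rfl
  -- measurability
  have hfmeas : ∀ n, 0 < u n → Measurable (fun ω => φ (Ef g α (u n) (σ (X ω)))) := by
    intro n hun
    have hm : Monotone (fun y : ℝ => Ef g α (u n) (max y 0)) := by
      intro y y' hyy
      exact Ef_mono hα hg0 hg1 hgpos hun (le_max_right y 0) (max_le_max hyy (le_refl 0))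
    have h2 : (fun ω => φ (Ef g α (u n) (σ (X ω)))) =
        fun ω => φ (Ef g α (u n) (max (σ (X ω)) 0)) := by
      funext ω
      rw [max_eq_left (hσnn _)]
    rw [h2]
    exact hφcont.measurable.comp (hm.measurable.comp (hσmeas.comp hXmeas))
  -- crude bound
  have hcrude : ∀ n, 0 < u n → ∀ ω, φ (Ef g α (u n) (σ (X ω))) ≤
      2 ^ p * ((1 / g (u n)) ^ p + σ (X ω) ^ (p * α)) := by
    intro n hun ω
    have h1 : Ef g α (u n) (σ (X ω)) ≤ 1 / g (u n) + σ (X ω) ^ α :=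
      Ef_le hα hg0 hg1 hgpos hun (hσnn _)
    have hd0 : (0:ℝ) ≤ 1 / g (u n) := div_nonneg zero_le_one (hg0 _)
    have hyα : (0:ℝ) ≤ σ (X ω) ^ α := Real.rpow_nonneg (hσnn _) α
    have h2 := hφmono h1
    rw [hφeq (1 / g (u n) + σ (X ω) ^ α) (by linarith)] at h2
    have h4 := rpow_sum_le p hp0.le hd0 hyα
    have h5 : (σ (X ω) ^ α) ^ p = σ (X ω) ^ (p * α) := by
      rw [← Real.rpow_mul (hσnn _), mul_comm]
    rw [h5] at h4
    linarith
  -- integrability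
  have hintf : ∀ n, 0 < u n → Integrable (fun ω => φ (Ef g α (u n) (σ (X ω)))) P := by
    intro n hun
    have h2p : (0:ℝ) < 2 ^ p := Real.rpow_pos_of_pos two_pos p
    have hD : Integrable (fun ω => 2^p * (((1/g (u n))^p + 1) + σ (X ω)^(α+ε))) P :=
      (((integrable_const ((1/g (u n))^p + 1)).add hmom).const_mul _)
    apply hD.mono' ((hfmeas n hun).aestronglyMeasurable)
    apply ae_of_all
    intro ω
    rw [Real.norm_eq_abs, abs_of_nonneg (hφnn _)]
    have h1 := hcrude n hun ω
    have h2 := rpow_le_one_add (α+ε) (p*α) (σ (X ω)) (mul_nonneg hp0.le hα.le)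
      (by linarith) (hσnn _)
    nlinarith [mul_le_mul_of_nonneg_left h2 h2p.le]
  have hun_of : ∀ n, t₀ ≤ u n → 0 < u n := fun n h => lt_of_lt_of_le ht₀0 h
  -- splitting sets
  set K : ℕ → ℝ := fun n => u n / t₀ with hKdef
  set A : ℕ → Set Ω := fun n => {ω | σ (X ω) ≤ K n} with hAdef
  have hAmeas : ∀ n, MeasurableSet (A n) := fun n =>
    measurableSet_le (hσmeas.comp hXmeas) measurable_const
  -- dominated sequence
  set v : ℕ → Ω → ℝ := fun n => if t₀ ≤ u n then
      (A n).indicator (fun ω => φ (Ef g α (u n) (σ (X ω)))) else fun _ => 0 with hvdef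
  have hvmeas : ∀ n, AEStronglyMeasurable (v n) P := by
    intro n
    simp only [hvdef]
    split_ifs with h
    · exact ((hfmeas n (hun_of n h)).indicator (hAmeas n)).aestronglyMeasurable
    · exact aestronglyMeasurable_const
  set C₅ : ℝ := 2^p * (2^p*2 + 2^(p*(α+δ))) with hC₅def
  have hvbound : ∀ n, ∀ ω, ‖v n ω‖ ≤ C₅ * (1 + σ (X ω) ^ (α+ε)) := by
    intro n ω
    have hσω := hσnn (X ω)
    have hw1 : (0:ℝ) ≤ σ (X ω) ^ (α+ε) := Real.rpow_nonneg hσω _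
    have h2p : (0:ℝ) < 2^p := Real.rpow_pos_of_pos two_pos p
    have h2pd : (0:ℝ) < 2^(p*(α+δ)) := Real.rpow_pos_of_pos two_pos _
    have hC₅nn : (0:ℝ) ≤ C₅ := by rw [hC₅def]; positivity
    have hRHS : (0:ℝ) ≤ C₅ * (1 + σ (X ω) ^ (α+ε)) := by nlinarith
    rw [Real.norm_eq_abs]
    simp only [hvdef]
    split_ifs with hn
    · by_cases hω : ω ∈ A n
      · rw [Set.indicator_of_mem hω, abs_of_nonneg (hφnn _)]
        set y := σ (X ω) with hydef
        have hun : 0 < u n := hun_of n hn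
        have hyK : y ≤ K n := hω
        have hEb : Ef g α (u n) y ≤ (1 + y^α) + (2*y)^(α+δ) := by
          rcases hσω.lt_or_eq with hy0 | hy0
          · have h2 := Ef_le2 hg0 hganti hgpos hun hy0 hα
            have hub : g (u n / y) / g (u n) ≤ 1 + (2*y)^(α+δ) := by
              rcases le_or_gt y 1 with hy1 | hy1
              · have h3 : u n ≤ u n / y := by
                  rw [le_div_iff₀ hy0]
                  nlinarith
                have h4 := hganti h3
                have h5 : g (u n / y) / g (u n) ≤ 1 :=
                  (div_le_one (hgpos _ hun)).mpr h4
                have h6 : (0:ℝ) ≤ (2*y)^(α+δ) := Real.rpow_nonneg (by linarith) _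
                linarith
              · have hty : t₀ * y ≤ u n := by
                  have := (le_div_iff₀ ht₀0).mp hyK
                  linarith [this]
                have h3 := hpotter (u n) y hy1.le hty
                have h5 : g (u n / y) / g (u n) ≤ (2*y)^(α+δ) :=
                  (div_le_iff₀ (hgpos _ hun)).mpr h3
                linarith
            have hya : (0:ℝ) ≤ y ^ α := Real.rpow_nonneg hσω α
            linarith
          · rw [← hy0, Ef_zero hα]
            positivity
        have hstep1 : φ (Ef g α (u n) y) ≤ ((1 + y^α) + (2*y)^(α+δ)) ^ p := by
          have h7 := hφmono hEb
          rwa [hφeq ((1 + y^α) + (2*y)^(α+δ)) (by positivity)] at h7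
        have h1ya : (0:ℝ) ≤ 1 + y^α := by positivity
        have h2ya : (0:ℝ) ≤ (2*y)^(α+δ) := by positivity
        have hs1 := rpow_sum_le p hp0.le h1ya h2ya
        have hs2 := rpow_sum_le p hp0.le zero_le_one (Real.rpow_nonneg hσω α)
        rw [Real.one_rpow] at hs2
        have hyap : (y ^ α) ^ p = y ^ (p*α) := by
          rw [← Real.rpow_mul hσω, mul_comm]
        rw [hyap] at hs2
        have h2yp : ((2*y)^(α+δ))^p = 2^(p*(α+δ)) * y^(p*(α+δ)) := by
          rw [← Real.rpow_mul (by linarith : (0:ℝ) ≤ 2*y),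
            Real.mul_rpow (by norm_num) hσω, mul_comm (α+δ) p]
        rw [h2yp] at hs1
        have hq1 := rpow_le_one_add (α+ε) (p*α) y (mul_nonneg hp0.le hα.le)
          (by linarith) hσω
        have hq2 := rpow_le_one_add (α+ε) (p*(α+δ)) y (mul_nonneg hp0.le hαδ.le)
          hpδ hσω
        have step4 : 1 + y^(p*α) ≤ 2 * (1 + y^(α+ε)) := by nlinarith
        calc φ (Ef g α (u n) y) ≤ ((1 + y^α) + (2*y)^(α+δ)) ^ p := hstep1
          _ ≤ 2^p * ((1+y^α)^p + 2^(p*(α+δ)) * y^(p*(α+δ))) := hs1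
          _ ≤ 2^p * ((2^p * (2 * (1 + y^(α+ε)))) + 2^(p*(α+δ)) * (1 + y^(α+ε))) := by
              have i1 : (1+y^α)^p ≤ 2^p * (2 * (1 + y^(α+ε))) :=
                le_trans hs2 (mul_le_mul_of_nonneg_left step4 h2p.le)
              have i2 : 2^(p*(α+δ)) * y^(p*(α+δ)) ≤ 2^(p*(α+δ)) * (1 + y^(α+ε)) :=
                mul_le_mul_of_nonneg_left hq2 h2pd.le
              exact mul_le_mul_of_nonneg_left (add_le_add i1 i2) h2p.le
          _ = C₅ * (1 + y^(α+ε)) := by rw [hC₅def]; ring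
      · rw [Set.indicator_of_notMem hω]
        simpa using hRHS
    · simpa using hRHS
  have hvconv : ∀ ω, Tendsto (fun n => v n ω) atTop (nhds 0) := by
    intro ω
    have h1 : Tendsto (fun t => Ef g α t (σ (X ω))) atTop (nhds 0) :=
      Ef_tendsto hα hg0 hg1 hganti hgpos hratio (hσnn _)
    have h2 : Tendsto (fun n => φ (Ef g α (u n) (σ (X ω)))) atTop (nhds 0) := by
      have h3 := (hφcont.tendsto 0).comp (h1.comp hu)
      rwa [hφ0] at h3
    apply h2.congr'
    have hKtop : Tendsto K atTop atTop := hu.atTop_div_const ht₀0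
    filter_upwards [hKtop.eventually_ge_atTop (σ (X ω)), hu.eventually_ge_atTop t₀]
      with n h1' h2'
    have hmem : ω ∈ A n := by simp only [hAdef, Set.mem_setOf_eq]; exact h1'
    simp only [hvdef]
    rw [if_pos h2', Set.indicator_of_mem hmem]
  have hDCT : Tendsto (fun n => ∫ ω, v n ω ∂P) atTop (nhds 0) := by
    have hbint : Integrable (fun ω => C₅ * (1 + σ (X ω)^(α+ε))) P :=
      ((integrable_const 1).add hmom).const_mul C₅
    have h := tendsto_integral_of_dominated_convergence
      (F := v) (f := fun _ => (0:ℝ)) (bound := fun ω => C₅ * (1 + σ (X ω)^(α+ε)))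
      hvmeas hbint (fun n => ae_of_all _ (hvbound n)) (ae_of_all _ hvconv)
    simpa using h
  -- Markov-type bounds on the complement
  set M₀ : ℝ := ∫ ω, σ (X ω)^(α+ε) ∂P with hM₀def
  have hKn1 : ∀ n, t₀ ≤ u n → 1 ≤ K n := fun n h => (one_le_div ht₀0).mpr h
  have hmarkov : ∀ n, t₀ ≤ u n → (P ((A n)ᶜ)).toReal ≤ (K n)^(-(α+ε)) * M₀ := by
    intro n hn
    have hK1 := hKn1 n hn
    have hK0 : (0:ℝ) < K n := by linarith
    have key : (K n)^(α+ε) * (P ((A n)ᶜ)).toReal ≤ M₀ := by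
      have h1 : ∀ ω, ((A n)ᶜ).indicator (fun _ => (K n)^(α+ε)) ω ≤ σ (X ω)^(α+ε) := by
        intro ω
        by_cases hω : ω ∈ (A n)ᶜ
        · rw [Set.indicator_of_mem hω]
          have h3 : ¬ (σ (X ω) ≤ K n) := hω
          exact Real.rpow_le_rpow hK0.le (le_of_lt (lt_of_not_ge h3)) (by positivity)
        · rw [Set.indicator_of_notMem hω]
          exact Real.rpow_nonneg (hσnn _) _
      have h2 := integral_mono
        ((integrable_const ((K n)^(α+ε))).indicator (hAmeas n).compl) hmom h1
      rw [integral_indicator_const _ (hAmeas n).compl, smul_eq_mul, measureReal_def] at h2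
      rw [hM₀def]
      linarith [h2]
    have h4 : (K n)^(-(α+ε)) * (K n)^(α+ε) = 1 := by
      rw [← Real.rpow_add hK0, show -(α+ε) + (α+ε) = 0 from by ring, Real.rpow_zero]
    calc (P ((A n)ᶜ)).toReal
        = ((K n)^(-(α+ε)) * (K n)^(α+ε)) * (P ((A n)ᶜ)).toReal := by rw [h4, one_mul]
      _ = (K n)^(-(α+ε)) * ((K n)^(α+ε) * (P ((A n)ᶜ)).toReal) := by ring
      _ ≤ (K n)^(-(α+ε)) * M₀ := mul_le_mul_of_nonneg_left key (by positivity)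
  have hmeaspα : Measurable (fun ω => σ (X ω)^(p*α)) := by
    have hc : Continuous (fun x : ℝ => max x 0 ^ (p*α)) :=
      (continuous_id.max continuous_const).rpow_const
        (fun x => Or.inr (mul_nonneg hp0.le hα.le))
    have he : (fun ω => σ (X ω)^(p*α)) = fun ω => max (σ (X ω)) 0 ^ (p*α) := by
      funext ω; rw [max_eq_left (hσnn _)]
    rw [he]
    exact hc.measurable.comp (hσmeas.comp hXmeas)
  have hintpα : Integrable (fun ω => σ (X ω)^(p*α)) P := by
    apply ((integrable_const 1).add hmom).mono' hmeaspα.aestronglyMeasurable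
    apply ae_of_all
    intro ω
    rw [Real.norm_eq_abs, abs_of_nonneg (Real.rpow_nonneg (hσnn _) _)]
    exact rpow_le_one_add (α+ε) (p*α) (σ (X ω)) (mul_nonneg hp0.le hα.le)
      (by linarith) (hσnn _)
  have hmarkov2 : ∀ n, t₀ ≤ u n →
      ∫ ω, ((A n)ᶜ).indicator (fun ω => σ (X ω)^(p*α)) ω ∂P
        ≤ (K n)^(p*α-(α+ε)) * M₀ := by
    intro n hn
    have hK1 := hKn1 n hn
    have hK0 : (0:ℝ) < K n := by linarith
    have h1 : ∀ ω, ((A n)ᶜ).indicator (fun ω => σ (X ω)^(p*α)) ω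
        ≤ (K n)^(p*α-(α+ε)) * σ (X ω)^(α+ε) := by
      intro ω
      by_cases hω : ω ∈ (A n)ᶜ
      · rw [Set.indicator_of_mem hω]
        have h3 : ¬ (σ (X ω) ≤ K n) := hω
        have h2 : K n ≤ σ (X ω) := le_of_lt (lt_of_not_ge h3)
        have hσ0 : (0:ℝ) < σ (X ω) := lt_of_lt_of_le hK0 h2
        have h5 : σ (X ω)^(p*α-(α+ε)) ≤ (K n)^(p*α-(α+ε)) :=
          Real.rpow_le_rpow_of_nonpos hK0 h2 (by linarith)
        have h6 : σ (X ω)^(p*α) = σ (X ω)^(α+ε) * σ (X ω)^(p*α-(α+ε)) := by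
          rw [← Real.rpow_add hσ0]; congr 1; ring
        rw [h6]
        calc σ (X ω)^(α+ε) * σ (X ω)^(p*α-(α+ε))
            ≤ σ (X ω)^(α+ε) * (K n)^(p*α-(α+ε)) :=
              mul_le_mul_of_nonneg_left h5 (Real.rpow_nonneg (hσnn _) _)
          _ = (K n)^(p*α-(α+ε)) * σ (X ω)^(α+ε) := by ring
      · rw [Set.indicator_of_notMem hω]
        exact mul_nonneg (Real.rpow_nonneg hK0.le _) (Real.rpow_nonneg (hσnn _) _)
    have h2 := integral_mono (hintpα.indicator (hAmeas n).compl)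
      (hmom.const_mul _) h1
    rw [integral_const_mul] at h2
    rw [hM₀def]
    exact h2
  -- bound on the complement integral
  have hterm2 : ∀ n, t₀ ≤ u n →
      ∫ ω, ((A n)ᶜ).indicator (fun ω => φ (Ef g α (u n) (σ (X ω)))) ω ∂P
        ≤ 2^p * ((c₁⁻¹ * (u n)^(α+δ))^p * ((K n)^(-(α+ε)) * M₀)
            + (K n)^(p*α-(α+ε)) * M₀) := by
    intro n hn
    have hun : 0 < u n := hun_of n hn
    have h2p : (0:ℝ) < 2^p := Real.rpow_pos_of_pos two_pos p
    have hgb : (1 / g (u n)) ^ p ≤ (c₁⁻¹ * (u n)^(α+δ))^p :=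
      Real.rpow_le_rpow (div_nonneg zero_le_one (hg0 _)) (hginv (u n) hn) hp0.le
    have h1 : ∀ ω, ((A n)ᶜ).indicator (fun ω => φ (Ef g α (u n) (σ (X ω)))) ω
        ≤ 2^p * (((A n)ᶜ).indicator (fun _ => (c₁⁻¹ * (u n)^(α+δ))^p) ω
            + ((A n)ᶜ).indicator (fun ω => σ (X ω)^(p*α)) ω) := by
      intro ω
      by_cases hω : ω ∈ (A n)ᶜ
      · rw [Set.indicator_of_mem hω, Set.indicator_of_mem hω, Set.indicator_of_mem hω]
        have h0 := hcrude n hun ω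
        nlinarith [mul_le_mul_of_nonneg_left hgb h2p.le]
      · rw [Set.indicator_of_notMem hω, Set.indicator_of_notMem hω,
          Set.indicator_of_notMem hω]
        simp [hφnn]
    have hint1 : Integrable
        (fun ω => ((A n)ᶜ).indicator (fun _ => (c₁⁻¹ * (u n)^(α+δ))^p) ω) P :=
      (integrable_const _).indicator (hAmeas n).compl
    have hint2 : Integrable
        (fun ω => ((A n)ᶜ).indicator (fun ω => σ (X ω)^(p*α)) ω) P :=
      hintpα.indicator (hAmeas n).compl
    have h3 := integral_mono ((hintf n hun).indicator (hAmeas n).compl)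
      ((hint1.add hint2).const_mul (2^p)) h1
    simp only [integral_const_mul] at h3
    have h5 := hmarkov n hn
    have h6 := hmarkov2 n hn
    have hc0 : (0:ℝ) ≤ (c₁⁻¹ * (u n)^(α+δ))^p := by positivity
    calc ∫ ω, ((A n)ᶜ).indicator (fun ω => φ (Ef g α (u n) (σ (X ω)))) ω ∂P
        ≤ 2^p * ∫ ω, (((A n)ᶜ).indicator (fun _ => (c₁⁻¹ * (u n)^(α+δ))^p) ω
            + ((A n)ᶜ).indicator (fun ω => σ (X ω)^(p*α)) ω) ∂P := h3
      _ = 2^p * ((P ((A n)ᶜ)).toReal * (c₁⁻¹ * (u n)^(α+δ))^p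
            + ∫ ω, ((A n)ᶜ).indicator (fun ω => σ (X ω)^(p*α)) ω ∂P) := by
          rw [integral_add hint1 hint2,
            integral_indicator_const _ (hAmeas n).compl, smul_eq_mul, measureReal_def]
      _ ≤ 2^p * ((c₁⁻¹ * (u n)^(α+δ))^p * ((K n)^(-(α+ε)) * M₀)
            + (K n)^(p*α-(α+ε)) * M₀) := by
          apply mul_le_mul_of_nonneg_left _ h2p.le
          apply add_le_add _ h6
          calc (P ((A n)ᶜ)).toReal * (c₁⁻¹ * (u n)^(α+δ))^p
              ≤ ((K n)^(-(α+ε)) * M₀) * (c₁⁻¹ * (u n)^(α+δ))^p :=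
                mul_le_mul_of_nonneg_right h5 hc0
            _ = (c₁⁻¹ * (u n)^(α+δ))^p * ((K n)^(-(α+ε)) * M₀) := by ring
  -- the second term tends to zero
  have hq1pos : 0 < p * δ := by positivity
  set Ca : ℝ := 2^p * ((c₁⁻¹)^p * M₀ / t₀^(-(α+ε))) with hCa
  set Cb : ℝ := 2^p * (M₀ / t₀^(p*α-(α+ε))) with hCb
  have hSconv : Tendsto (fun n => 2^p * ((c₁⁻¹ * (u n)^(α+δ))^p * ((K n)^(-(α+ε)) * M₀)
      + (K n)^(p*α-(α+ε)) * M₀)) atTop (nhds 0) := by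
    have t1 : Tendsto (fun n => (u n)^(-(p*δ))) atTop (nhds 0) :=
      (tendsto_rpow_neg_atTop hq1pos).comp hu
    have t2 : Tendsto (fun n => (u n)^(-(2*(p*δ)))) atTop (nhds 0) :=
      (tendsto_rpow_neg_atTop (by positivity)).comp hu
    have t3 : Tendsto (fun n => Ca * (u n)^(-(p*δ)) + Cb * (u n)^(-(2*(p*δ))))
        atTop (nhds (Ca * 0 + Cb * 0)) := (t1.const_mul Ca).add (t2.const_mul Cb)
    rw [mul_zero, mul_zero, add_zero] at t3
    apply t3.congr'
    filter_upwards [hu.eventually_gt_atTop 0] with n hun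
    have e1 : (c₁⁻¹ * (u n)^(α+δ))^p = (c₁⁻¹)^p * (u n)^((α+δ)*p) := by
      rw [Real.mul_rpow (by positivity) (by positivity), ← Real.rpow_mul hun.le]
    have e2 : (K n)^(-(α+ε)) = (u n)^(-(α+ε)) / t₀^(-(α+ε)) := by
      simp only [hKdef]
      exact Real.div_rpow hun.le ht₀0.le _
    have e3 : (K n)^(p*α-(α+ε)) = (u n)^(p*α-(α+ε)) / t₀^(p*α-(α+ε)) := by
      simp only [hKdef]
      exact Real.div_rpow hun.le ht₀0.le _
    have e4 : (u n)^((α+δ)*p) * (u n)^(-(α+ε)) = (u n)^(-(p*δ)) := by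
      rw [← Real.rpow_add hun]
      congr 1
      linear_combination hpδ2
    have e5 : (u n)^(p*α-(α+ε)) = (u n)^(-(2*(p*δ))) := by
      congr 1
      linear_combination hpδ2
    have hne1 : t₀^(-(α+ε)) ≠ 0 := (Real.rpow_pos_of_pos ht₀0 _).ne'
    have hne2 : t₀^(p*α-(α+ε)) ≠ 0 := (Real.rpow_pos_of_pos ht₀0 _).ne'
    calc Ca * (u n)^(-(p*δ)) + Cb * (u n)^(-(2*(p*δ)))
        = Ca * ((u n)^((α+δ)*p) * (u n)^(-(α+ε))) + Cb * (u n)^(-(2*(p*δ))) := by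
          rw [e4]
      _ = 2^p * (((c₁⁻¹)^p * (u n)^((α+δ)*p))
            * ((u n)^(-(α+ε)) / t₀^(-(α+ε)) * M₀)
            + ((u n)^(-(2*(p*δ))) / t₀^(p*α-(α+ε))) * M₀) := by
          rw [hCa, hCb]
          field_simp
      _ = 2^p * ((c₁⁻¹ * (u n)^(α+δ))^p * ((K n)^(-(α+ε)) * M₀)
            + (K n)^(p*α-(α+ε)) * M₀) := by
          rw [e1, e2, e3, e5]
  -- final squeeze
  apply squeeze_zero' (g := fun n => (∫ ω, v n ω ∂P)
    + 2^p * ((c₁⁻¹ * (u n)^(α+δ))^p * ((K n)^(-(α+ε)) * M₀) + (K n)^(p*α-(α+ε)) * M₀))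
  · apply Eventually.of_forall
    intro n
    exact integral_nonneg fun ω =>
      Real.iSup_nonneg fun s => Real.rpow_nonneg (abs_nonneg _) p
  · filter_upwards [hu.eventually_ge_atTop t₀] with n hn
    have hun : 0 < u n := hun_of n hn
    have hIeq : (∫ ω, (⨆ s : {s : ℝ // 0 ≤ s},
        |Gn n (X ω) (s:ℝ) - σ (X ω) ^ α * T (s:ℝ)| ^ p) ∂P)
        = ∫ ω, φ (Ef g α (u n) (σ (X ω))) ∂P :=
      integral_congr_ae (ae_of_all _ (fun ω => hI n hun ω))
    rw [hIeq]
    have hsplit : (fun ω => φ (Ef g α (u n) (σ (X ω))))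
        = fun ω => (A n).indicator (fun ω => φ (Ef g α (u n) (σ (X ω)))) ω
            + ((A n)ᶜ).indicator (fun ω => φ (Ef g α (u n) (σ (X ω)))) ω := by
      funext ω
      exact (Set.indicator_self_add_compl_apply (A n)
        (fun ω => φ (Ef g α (u n) (σ (X ω)))) ω).symm
    rw [hsplit, integral_add ((hintf n hun).indicator (hAmeas n))
      ((hintf n hun).indicator (hAmeas n).compl)]
    have hv_eq : ∫ ω, (A n).indicator (fun ω => φ (Ef g α (u n) (σ (X ω)))) ω ∂P
        = ∫ ω, v n ω ∂P := by
      apply integral_congr_ae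
      apply ae_of_all
      intro ω
      simp only [hvdef]
      rw [if_pos hn]
    rw [hv_eq]
    exact add_le_add (le_refl _) (hterm2 n hn)
  · have h := hDCT.add hSconv
    simpa using h
end
end

section
/- Let α>0 and let Z₁, Z₂ be i.i.d. nonnegative random variables with common tail P(Z>z)=z^{-α}ℓ(z), ℓ slowly varying at infinity. Let (ξ₁,ξ₂) be a pair of nonnegative random variables, independent of (Z₁,Z₂), such that for some ε>0, E[ξ₁^{α+ε}]<∞, E[ξ₂^{α+ε}]<∞ and E[ξ₁^{α+ε} ξ₂^{α+ε}]<∞. Then for all a>0, b>0, lim_{u→∞} P(ξ₁Z₁ > ua, ξ₂Z₂ > ub)/P(Z>u)² = a^{-α} b^{-α} E[ξ₁^α ξ₂^α]. -/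
open MeasureTheory ProbabilityTheory Filter

noncomputable section

open scoped ENNReal NNReal

private lemma potter_aux {G : ℝ → ℝ} (hG : Antitone G) (hGnn : ∀ x, 0 ≤ G x)
    {q u₀ : ℝ} (hq : 0 < q) (hu₀ : 0 < u₀)
    (hdbl : ∀ u, u₀ ≤ u → G (u / 2) ≤ 2 ^ q * G u) :
    ∀ n : ℕ, ∀ u z : ℝ, u₀ ≤ z → z ≤ u → u ≤ 2 ^ n * z →
      G z ≤ 2 ^ q * (u / z) ^ q * G u := by
  have h2q : (0:ℝ) < 2 ^ q := Real.rpow_pos_of_pos two_pos q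
  intro n
  induction n with
  | zero =>
    intro u z hz hzu huz
    have : u = z := le_antisymm (by simpa using huz) hzu
    subst this
    have hz0 : (0:ℝ) < u := lt_of_lt_of_le hu₀ hz
    rw [div_self hz0.ne', Real.one_rpow]
    have h1q : (1:ℝ) ≤ 2 ^ q := Real.one_le_rpow one_le_two hq.le
    nlinarith [hGnn u]
  | succ n ih =>
    intro u z hz hzu huz
    have hz0 : (0:ℝ) < z := lt_of_lt_of_le hu₀ hz
    have hu0 : (0:ℝ) < u := lt_of_lt_of_le hz0 hzu
    have huu₀ : u₀ ≤ u := le_trans hz hzu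
    rcases le_or_gt u (2 * z) with h | h
    · have h1 : G z ≤ G (u / 2) := hG (by linarith)
      have h2 : G (u / 2) ≤ 2 ^ q * G u := hdbl u huu₀
      have h3 : (1:ℝ) ≤ (u / z) ^ q :=
        Real.one_le_rpow ((le_div_iff₀ hz0).mpr (by linarith)) hq.le
      have h5 := mul_le_mul_of_nonneg_left h3 (mul_nonneg h2q.le (hGnn u))
      nlinarith [hGnn u]
    · have h1 : z ≤ u / 2 := by linarith
      have h2 : u / 2 ≤ 2 ^ n * z := by
        rw [pow_succ] at huz; linarith
      have ihz := ih (u / 2) z hz h1 h2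
      have h3 : G (u / 2) ≤ 2 ^ q * G u := hdbl u huu₀
      have h4 : (u / 2 / z) ^ q = (u / z) ^ q / 2 ^ q := by
        have e : u / 2 / z = u / z / 2 := by ring
        rw [e, Real.div_rpow (by positivity) (by norm_num)]
      rw [h4] at ihz
      have h5 : (0:ℝ) ≤ (u / z) ^ q := by positivity
      calc G z ≤ 2 ^ q * ((u / z) ^ q / 2 ^ q) * G (u / 2) := ihz
        _ = (u / z) ^ q * G (u / 2) := by field_simp
        _ ≤ (u / z) ^ q * (2 ^ q * G u) := by
            exact mul_le_mul_of_nonneg_left h3 h5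
        _ = 2 ^ q * (u / z) ^ q * G u := by ring

private lemma potter {G : ℝ → ℝ} (hG : Antitone G) (hGnn : ∀ x, 0 ≤ G x)
    {q u₀ : ℝ} (hq : 0 < q) (hu₀ : 0 < u₀)
    (hdbl : ∀ u, u₀ ≤ u → G (u / 2) ≤ 2 ^ q * G u) :
    ∀ u z : ℝ, u₀ ≤ z → z ≤ u → G z ≤ 2 ^ q * (u / z) ^ q * G u := by
  intro u z hz hzu
  have hz0 : (0:ℝ) < z := lt_of_lt_of_le hu₀ hz
  obtain ⟨n, hn⟩ := pow_unbounded_of_one_lt (u / z) (one_lt_two (α := ℝ))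
  exact potter_aux hG hGnn hq hu₀ hdbl n u z hz hzu
    (by rw [div_lt_iff₀ hz0] at hn; linarith)

set_option maxHeartbeats 1000000 in
private lemma dom_lemma {G : ℝ → ℝ} (hGanti : Antitone G) (hGnn : ∀ x, 0 ≤ G x)
    (hGle1 : ∀ x, G x ≤ 1) {α ε : ℝ} (hα : 0 < α) (hε : 0 < ε)
    (hGpos : ∀ u : ℝ, 0 < u → 0 < G u)
    (hdbl : ∀ q, α < q → ∃ u₀, 0 < u₀ ∧ ∀ u, u₀ ≤ u → G (u / 2) ≤ 2 ^ q * G u)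
    (c : ℝ) (hc : 0 < c) :
    ∃ C, 0 < C ∧ ∀ᶠ u : ℝ in atTop, ∀ x : ℝ, 0 ≤ x →
      (if 0 < x then G (u * c / x) else 0) ≤ C * (1 + x ^ (α + ε)) * G u := by
  set p := α + ε with hpdef
  set q := α + ε / 2 with hqdef
  have hp0 : 0 < p := by positivity
  have hq0 : 0 < q := by positivity
  obtain ⟨u₀p, hu₀p, hdblp⟩ := hdbl p (by simp [hpdef]; linarith)
  obtain ⟨u₀q, hu₀q, hdblq⟩ := hdbl q (by simp [hqdef]; linarith)
  set u₀ := max u₀p u₀q with hu₀def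
  have hu₀ : 0 < u₀ := lt_of_lt_of_le hu₀p (le_max_left _ _)
  have hpotP : ∀ u z : ℝ, u₀ ≤ z → z ≤ u → G z ≤ 2 ^ p * (u / z) ^ p * G u :=
    potter hGanti hGnn hp0 hu₀ fun u hu => hdblp u (le_trans (le_max_left _ _) hu)
  have hpotQ : ∀ u z : ℝ, u₀ ≤ z → z ≤ u → G z ≤ 2 ^ q * (u / z) ^ q * G u :=
    potter hGanti hGnn hq0 hu₀ fun u hu => hdblq u (le_trans (le_max_right _ _) hu)
  have h2p : (0:ℝ) < 2 ^ p := Real.rpow_pos_of_pos two_pos p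
  have h2q : (0:ℝ) < 2 ^ q := Real.rpow_pos_of_pos two_pos q
  have hGu₀ : 0 < G u₀ := hGpos u₀ hu₀
  set C := max 1 (2 ^ p / c ^ p) with hCdef
  have hC1 : (1:ℝ) ≤ C := le_max_left _ _
  have hC0 : 0 < C := lt_of_lt_of_le one_pos hC1
  set D := (c / u₀) ^ p * G u₀ * u₀ ^ q / 2 ^ q with hDdef
  have hD0 : 0 < D := by positivity
  refine ⟨C, hC0, ?_⟩
  have hev : ∀ᶠ u : ℝ in atTop, 1 ≤ D * u ^ (ε / 2) := by
    have := (tendsto_rpow_atTop (show (0:ℝ) < ε / 2 by positivity)).const_mul_atTop hD0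
    exact this.eventually_ge_atTop 1
  filter_upwards [hev, eventually_ge_atTop u₀, eventually_gt_atTop 0] with u hDu hu₀u hu0
  intro x hx
  rcases hx.lt_or_eq with hx0 | hx0
  swap
  · rw [if_neg (by rw [← hx0]; exact lt_irrefl 0)]
    have hxp : 0 ≤ x ^ p := Real.rpow_nonneg hx p
    have : (0:ℝ) ≤ C * (1 + x ^ p) := mul_nonneg hC0.le (by linarith)
    exact mul_nonneg this (hGnn u)
  rw [if_pos hx0]
  set z := u * c / x with hzdef
  have hz0 : 0 < z := by positivity
  have hGu : 0 < G u := hGpos u hu0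
  rcases le_or_gt u z with hcase1 | hcase2
  · -- z ≥ u : G z ≤ G u
    have h1 : G z ≤ G u := hGanti hcase1
    have h2 : (0:ℝ) ≤ x ^ p := Real.rpow_nonneg hx p
    have h3 : (1:ℝ) * G u ≤ C * (1 + x ^ p) * G u :=
      mul_le_mul_of_nonneg_right (by nlinarith) (hGnn u)
    linarith
  rcases le_or_gt u₀ z with hcase2a | hcase2b
  · -- u₀ ≤ z < u : Potter
    have h1 := hpotP u z hcase2a hcase2.le
    have huz : u / z = x / c := by
      rw [hzdef]; field_simp
    have h2 : (u / z) ^ p = x ^ p / c ^ p := by rw [huz, Real.div_rpow hx hc.le]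
    rw [h2] at h1
    have hcp : (0:ℝ) < c ^ p := Real.rpow_pos_of_pos hc p
    have hxp : (0:ℝ) ≤ x ^ p := Real.rpow_nonneg hx p
    have hCge : 2 ^ p / c ^ p ≤ C := le_max_right _ _
    have h3 : 2 ^ p * (x ^ p / c ^ p) ≤ C * (1 + x ^ p) := by
      calc 2 ^ p * (x ^ p / c ^ p) = 2 ^ p / c ^ p * x ^ p := by ring
        _ ≤ C * x ^ p := mul_le_mul_of_nonneg_right hCge hxp
        _ ≤ C * (1 + x ^ p) := by nlinarith
    have h4 := mul_le_mul_of_nonneg_right h3 (hGnn u)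
    linarith
  · -- z < u₀ : use lower bound
    have hA := hpotQ u u₀ le_rfl hu₀u
    set vq := u ^ q with hvq
    set ve := u ^ (ε / 2) with hve
    set w := (c / u₀) ^ p with hw
    set k := u₀ ^ q with hk
    have hvq0 : 0 < vq := Real.rpow_pos_of_pos hu0 q
    have hve0 : 0 < ve := Real.rpow_pos_of_pos hu0 (ε / 2)
    have hw0 : 0 < w := Real.rpow_pos_of_pos (by positivity) p
    have hk0 : 0 < k := Real.rpow_pos_of_pos hu₀ q
    have e1 : (u / u₀) ^ q = vq / k := Real.div_rpow hu0.le hu₀.le q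
    rw [e1, show 2 ^ q * (vq / k) * G u = 2 ^ q * vq * G u / k from by ring] at hA
    have hA2 : G u₀ * k ≤ 2 ^ q * vq * G u := (le_div_iff₀ hk0).mp hA
    have hxbig : u * c / u₀ ≤ x := by
      rw [div_le_iff₀ hu₀]
      have := (div_lt_iff₀ hx0).mp hcase2b
      linarith [mul_comm x u₀, mul_comm u₀ x]
    have hxp : (u * c / u₀) ^ p ≤ x ^ p :=
      Real.rpow_le_rpow (by positivity) hxbig hp0.le
    have e2 : (u * c / u₀) ^ p = vq * ve * w := by
      rw [show u * c / u₀ = u * (c / u₀) from by ring,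
        Real.mul_rpow hu0.le (by positivity), ← hw,
        show p = q + ε / 2 from by rw [hpdef, hqdef]; ring,
        Real.rpow_add hu0, ← hvq, ← hve]
    rw [e2] at hxp
    have key : 1 ≤ C * (1 + x ^ p) * G u := by
      have s1 : G u₀ * k / 2 ^ q ≤ vq * G u := by
        rw [div_le_iff₀ h2q]; linear_combination hA2
      have s2 : D * ve = ve * w * (G u₀ * k / 2 ^ q) := by rw [hDdef]; ring
      have s3 : ve * w * (G u₀ * k / 2 ^ q) ≤ ve * w * (vq * G u) :=
        mul_le_mul_of_nonneg_left s1 (by positivity)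
      have s4 : ve * w * (vq * G u) = vq * ve * w * G u := by ring
      have s5 : vq * ve * w * G u ≤ x ^ p * G u :=
        mul_le_mul_of_nonneg_right hxp (hGnn u)
      have s6 : x ^ p * G u ≤ C * (1 + x ^ p) * G u := by
        have h0 : 0 ≤ x ^ p := Real.rpow_nonneg hx p
        have : x ^ p ≤ C * (1 + x ^ p) := by nlinarith [h0, hC1]
        exact mul_le_mul_of_nonneg_right this (hGnn u)
      linarith
    linarith [hGle1 z]

set_option maxHeartbeats 1000000 in
/-- Bivariate Breiman lemma: for i.i.d. `Z₁, Z₂` with common regularly varying tail of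
index `-α`, and a pair `(ξ₁, ξ₂)` of nonnegative r.v.'s independent of `(Z₁, Z₂)` with
suitable moments, `P(ξ₁Z₁ > ua, ξ₂Z₂ > ub)/P(Z > u)² → a^{-α} b^{-α} E[ξ₁^α ξ₂^α]`. -/
theorem stmt_2 {Ω : Type*} [MeasurableSpace Ω] (P : Measure Ω) [IsProbabilityMeasure P]
    (α : ℝ) (hα : 0 < α)
    (Z₁ Z₂ : Ω → ℝ) (hZ₁meas : Measurable Z₁) (hZ₂meas : Measurable Z₂)
    (hZ₁nn : ∀ ω, 0 ≤ Z₁ ω) (hZ₂nn : ∀ ω, 0 ≤ Z₂ ω)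
    (hZindep : IndepFun Z₁ Z₂ P) (hZid : IdentDistrib Z₁ Z₂ P P)
    (ℓ : ℝ → ℝ) (hℓ : SlowlyVarying ℓ)
    (htail : ∀ z > (0:ℝ), (P {ω | Z₁ ω > z}).toReal = z ^ (-α) * ℓ z)
    (ξ₁ ξ₂ : Ω → ℝ) (hξ₁meas : Measurable ξ₁) (hξ₂meas : Measurable ξ₂)
    (hξ₁nn : ∀ ω, 0 ≤ ξ₁ ω) (hξ₂nn : ∀ ω, 0 ≤ ξ₂ ω)
    (hindep : IndepFun (fun ω => (ξ₁ ω, ξ₂ ω)) (fun ω => (Z₁ ω, Z₂ ω)) P)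
    (ε : ℝ) (hε : 0 < ε)
    (hmom₁ : Integrable (fun ω => ξ₁ ω ^ (α + ε)) P)
    (hmom₂ : Integrable (fun ω => ξ₂ ω ^ (α + ε)) P)
    (hmom₁₂ : Integrable (fun ω => ξ₁ ω ^ (α + ε) * ξ₂ ω ^ (α + ε)) P) :
    ∀ a > (0:ℝ), ∀ b > (0:ℝ),
      Tendsto
        (fun u : ℝ =>
          (P {ω | ξ₁ ω * Z₁ ω > u * a ∧ ξ₂ ω * Z₂ ω > u * b}).toReal
            / ((P {ω | Z₁ ω > u}).toReal) ^ 2)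
        atTop
        (nhds (a ^ (-α) * b ^ (-α) * ∫ ω, ξ₁ ω ^ α * ξ₂ ω ^ α ∂P)) := by
  obtain ⟨-, hℓpos, hℓslow⟩ := hℓ
  intro a ha b hb
  set p := α + ε with hpdef
  set G : ℝ → ℝ := fun z => (P {ω | Z₁ ω > z}).toReal with hGdef
  have hGanti : Antitone G := by
    intro z₁ z₂ h
    exact ENNReal.toReal_mono (measure_ne_top _ _)
      (measure_mono (fun ω hω => lt_of_le_of_lt h hω))
  have hGnn : ∀ z, 0 ≤ G z := fun z => ENNReal.toReal_nonneg
  have hGle1 : ∀ z, G z ≤ 1 := fun z => by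
    simpa using ENNReal.toReal_mono ENNReal.one_ne_top prob_le_one
  have hGpos : ∀ u : ℝ, 0 < u → 0 < G u := fun u hu => by
    rw [hGdef]; simp only; rw [htail u hu]
    exact mul_pos (Real.rpow_pos_of_pos hu _) (hℓpos u hu)
  have hGmeas : Measurable G := hGanti.measurable
  -- regular variation
  have hrv : ∀ x : ℝ, 0 < x →
      Tendsto (fun u => G (u * x) / G u) atTop (nhds (x ^ (-α))) := by
    intro x hx
    have heq : ∀ᶠ u : ℝ in atTop,
        x ^ (-α) * (ℓ (u * x) / ℓ u) = G (u * x) / G u := by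
      filter_upwards [eventually_gt_atTop 0] with u hu
      have hux : 0 < u * x := mul_pos hu hx
      rw [hGdef]; simp only
      rw [htail _ hux, htail u hu, Real.mul_rpow hu.le hx.le]
      have h1 : u ^ (-α) ≠ 0 := (Real.rpow_pos_of_pos hu _).ne'
      have h2 : ℓ u ≠ 0 := (hℓpos u hu).ne'
      field_simp
    have := (hℓslow x hx).const_mul (x ^ (-α))
    rw [mul_one] at this
    exact this.congr' heq
  -- doubling
  have hdbl : ∀ q, α < q → ∃ u₀, 0 < u₀ ∧ ∀ u, u₀ ≤ u → G (u / 2) ≤ 2 ^ q * G u := by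
    intro q hq
    have h2 : (2:ℝ) ^ α < 2 ^ q := by
      exact Real.rpow_lt_rpow_left_iff one_lt_two |>.mpr hq
    have hhalf : ((1:ℝ)/2) ^ (-α) = 2 ^ α := by
      rw [Real.div_rpow zero_le_one (by norm_num), Real.one_rpow,
        Real.rpow_neg (by norm_num), one_div, inv_inv]
    have hev : ∀ᶠ u : ℝ in atTop, G (u * (1/2)) / G u < 2 ^ q := by
      apply (hrv (1/2) (by norm_num)).eventually_lt_const
      rw [hhalf]; exact h2
    rw [eventually_atTop] at hev
    obtain ⟨u₁, hu₁⟩ := hev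
    refine ⟨max u₁ 1, lt_of_lt_of_le one_pos (le_max_right _ _), fun u hu => ?_⟩
    have hu0 : (0:ℝ) < u := lt_of_lt_of_le one_pos (le_trans (le_max_right _ _) hu)
    have := hu₁ u (le_trans (le_max_left _ _) hu)
    rw [div_lt_iff₀ (hGpos u hu0)] at this
    rw [show u / 2 = u * (1/2) from by ring]
    linarith
  -- the kernel K
  set K : ℝ → ℝ → ℝ := fun x s => if 0 < x then G (s / x) else 0 with hKdef
  have hKmeas : ∀ s : ℝ, Measurable (fun x => K x s) := by
    intro s
    apply Measurable.ite (measurableSet_lt measurable_const measurable_id)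
    · exact hGmeas.comp (measurable_const.div measurable_id)
    · exact measurable_const
  have hKnn : ∀ x s, 0 ≤ K x s := fun x s => by
    rw [hKdef]; dsimp only; split_ifs; exacts [hGnn _, le_rfl]
  -- section formula
  have hmapTail : ∀ r : ℝ, (P.map Z₁) (Set.Ioi r) = P {ω | Z₁ ω > r} := by
    intro r; rw [Measure.map_apply hZ₁meas measurableSet_Ioi]; rfl
  have hsec : ∀ x s : ℝ, 0 ≤ x → 0 < s →
      (P.map Z₁) {z | x * z > s} = ENNReal.ofReal (K x s) := by
    intro x s hx hs
    rcases hx.eq_or_lt with hx0 | hx0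
    · have hset : {z : ℝ | x * z > s} = ∅ := by
        ext z
        simp only [Set.mem_setOf_eq, Set.mem_empty_iff_false, iff_false, gt_iff_lt, not_lt,
          ← hx0, zero_mul]
        exact hs.le
      rw [hset, hKdef]; dsimp only
      rw [if_neg (by rw [← hx0]; exact lt_irrefl 0)]
      simp
    · have hset : {z : ℝ | x * z > s} = Set.Ioi (s / x) := by
        ext z
        simp only [Set.mem_setOf_eq, Set.mem_Ioi, gt_iff_lt, div_lt_iff₀ hx0]
        constructor <;> intro h <;> nlinarith
      rw [hset, hmapTail, hKdef]; dsimp only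
      rw [if_pos hx0]
      exact (ENNReal.ofReal_toReal (measure_ne_top _ _)).symm
  -- identity
  have hηmeas : Measurable (fun ω => (ξ₁ ω, ξ₂ ω)) := hξ₁meas.prodMk hξ₂meas
  have hWmeas : Measurable (fun ω => (Z₁ ω, Z₂ ω)) := hZ₁meas.prodMk hZ₂meas
  have hmapW : P.map (fun ω => (Z₁ ω, Z₂ ω)) = (P.map Z₁).prod (P.map Z₁) := by
    rw [(indepFun_iff_map_prod_eq_prod_map_map hZ₁meas.aemeasurable
      hZ₂meas.aemeasurable).mp hZindep, hZid.map_eq]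
  have hident : ∀ s t : ℝ, 0 < s → 0 < t →
      (P {ω | ξ₁ ω * Z₁ ω > s ∧ ξ₂ ω * Z₂ ω > t}).toReal
        = ∫ ω, K (ξ₁ ω) s * K (ξ₂ ω) t ∂P := by
    intro s t hs ht
    set S : Set ((ℝ × ℝ) × ℝ × ℝ) := {w | w.1.1 * w.2.1 > s ∧ w.1.2 * w.2.2 > t} with hSdef
    have hSmeas : MeasurableSet S := by
      apply MeasurableSet.inter
      · exact measurableSet_lt measurable_const (measurable_fst.fst.mul measurable_snd.fst)
      · exact measurableSet_lt measurable_const (measurable_fst.snd.mul measurable_snd.snd)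
    have h1 : P {ω | ξ₁ ω * Z₁ ω > s ∧ ξ₂ ω * Z₂ ω > t}
        = ((P.map fun ω => (ξ₁ ω, ξ₂ ω)).prod ((P.map Z₁).prod (P.map Z₁))) S := by
      rw [← hmapW,
        ← (indepFun_iff_map_prod_eq_prod_map_map hηmeas.aemeasurable
            hWmeas.aemeasurable).mp hindep,
        Measure.map_apply (hηmeas.prodMk hWmeas) hSmeas]
      rfl
    have h2 : ∀ x : ℝ × ℝ,
        (Prod.mk x ⁻¹' S) = {z₁ : ℝ | x.1 * z₁ > s} ×ˢ {z₂ : ℝ | x.2 * z₂ > t} := by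
      intro x; ext z
      simp only [hSdef, Set.mem_preimage, Set.mem_setOf_eq, Set.mem_prod]
    set g : ℝ × ℝ → ℝ≥0∞ := fun x => ENNReal.ofReal (K x.1 s) * ENNReal.ofReal (K x.2 t)
      with hgdef
    have hgmeas : Measurable g :=
      (ENNReal.measurable_ofReal.comp ((hKmeas s).comp measurable_fst)).mul
        (ENNReal.measurable_ofReal.comp ((hKmeas t).comp measurable_snd))
    have h3 : ((P.map fun ω => (ξ₁ ω, ξ₂ ω)).prod ((P.map Z₁).prod (P.map Z₁))) S
        = ∫⁻ x, g x ∂(P.map fun ω => (ξ₁ ω, ξ₂ ω)) := by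
      rw [Measure.prod_apply hSmeas]
      apply lintegral_congr_ae
      have hae : ∀ᵐ x : ℝ × ℝ ∂(P.map fun ω => (ξ₁ ω, ξ₂ ω)), 0 ≤ x.1 ∧ 0 ≤ x.2 := by
        refine (ae_map_iff hηmeas.aemeasurable ?_).mpr
          (ae_of_all _ fun ω => ⟨hξ₁nn ω, hξ₂nn ω⟩)
        exact (measurableSet_le measurable_const measurable_fst).inter
          (measurableSet_le measurable_const measurable_snd)
      filter_upwards [hae] with x hx
      rw [h2 x, Measure.prod_prod, hsec x.1 s hx.1 hs, hsec x.2 t hx.2 ht]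
    have h4 : ∫⁻ x, g x ∂(P.map fun ω => (ξ₁ ω, ξ₂ ω))
        = ∫⁻ ω, ENNReal.ofReal (K (ξ₁ ω) s * K (ξ₂ ω) t) ∂P := by
      rw [lintegral_map hgmeas hηmeas]
      exact lintegral_congr fun ω => (ENNReal.ofReal_mul (hKnn _ _)).symm
    rw [h1, h3, h4,
      ← integral_eq_lintegral_of_nonneg_ae
        (ae_of_all _ fun ω => mul_nonneg (hKnn _ _) (hKnn _ _))
        (((hKmeas s).comp hξ₁meas).mul ((hKmeas t).comp hξ₂meas)).aestronglyMeasurable]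
  -- domination constants
  obtain ⟨Ca, hCa0, hCa⟩ := dom_lemma hGanti hGnn hGle1 hα hε hGpos hdbl a ha
  obtain ⟨Cb, hCb0, hCb⟩ := dom_lemma hGanti hGnn hGle1 hα hε hGpos hdbl b hb
  set F : ℝ → Ω → ℝ := fun u ω => (K (ξ₁ ω) (u * a) / G u) * (K (ξ₂ ω) (u * b) / G u)
    with hFdef
  set f : Ω → ℝ := fun ω => a ^ (-α) * b ^ (-α) * (ξ₁ ω ^ α * ξ₂ ω ^ α) with hfdef
  set bound : Ω → ℝ := fun ω => (Ca * (1 + ξ₁ ω ^ p)) * (Cb * (1 + ξ₂ ω ^ p)) with hbdef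
  have hbint : Integrable bound P := by
    have hb2 : bound = fun ω =>
        Ca * Cb * (((1 : ℝ) + ξ₁ ω ^ p + ξ₂ ω ^ p) + ξ₁ ω ^ p * ξ₂ ω ^ p) := by
      funext ω; rw [hbdef]; ring
    rw [hb2]
    exact ((((integrable_const (1:ℝ)).add hmom₁).add hmom₂).add hmom₁₂).const_mul _
  have hFmeas : ∀ u : ℝ, AEStronglyMeasurable (F u) P := fun u =>
    ((((hKmeas (u*a)).comp hξ₁meas).div_const _).mul
      (((hKmeas (u*b)).comp hξ₂meas).div_const _)).aestronglyMeasurable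
  have h_bound : ∀ᶠ u : ℝ in atTop, ∀ᵐ ω ∂P, ‖F u ω‖ ≤ bound ω := by
    filter_upwards [hCa, hCb, eventually_gt_atTop 0] with u ha' hb' hu0
    apply ae_of_all
    intro ω
    have hGu : 0 < G u := hGpos u hu0
    have h1 : K (ξ₁ ω) (u * a) / G u ≤ Ca * (1 + ξ₁ ω ^ p) := by
      rw [div_le_iff₀ hGu]
      exact ha' (ξ₁ ω) (hξ₁nn ω)
    have h2 : K (ξ₂ ω) (u * b) / G u ≤ Cb * (1 + ξ₂ ω ^ p) := by
      rw [div_le_iff₀ hGu]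
      exact hb' (ξ₂ ω) (hξ₂nn ω)
    have hn1 : 0 ≤ K (ξ₁ ω) (u * a) / G u := div_nonneg (hKnn _ _) hGu.le
    have hn2 : 0 ≤ K (ξ₂ ω) (u * b) / G u := div_nonneg (hKnn _ _) hGu.le
    rw [hFdef]; dsimp only
    rw [Real.norm_of_nonneg (mul_nonneg hn1 hn2)]
    exact mul_le_mul h1 h2 hn2 (le_trans hn1 h1)
  have hpt : ∀ c : ℝ, 0 < c → ∀ x : ℝ, 0 ≤ x →
      Tendsto (fun u => K x (u * c) / G u) atTop (nhds (c ^ (-α) * x ^ α)) := by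
    intro c hc x hx
    rcases hx.eq_or_lt with hx0 | hx0
    · have hz : (fun u : ℝ => K x (u * c) / G u) = fun _ => 0 := by
        funext u; rw [hKdef]; dsimp only
        rw [if_neg (by rw [← hx0]; exact lt_irrefl 0), zero_div]
      rw [hz, ← hx0, Real.zero_rpow hα.ne', mul_zero]
      exact tendsto_const_nhds
    · have heq : (fun u : ℝ => K x (u * c) / G u)
          = fun u => G (u * (c / x)) / G u := by
        funext u; rw [hKdef]; dsimp only
        rw [if_pos hx0, mul_div_assoc]
      have hlim : (c / x) ^ (-α) = c ^ (-α) * x ^ α := by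
        rw [Real.div_rpow hc.le hx (-α), Real.rpow_neg hx]
        field_simp
      rw [heq, ← hlim]
      exact hrv (c / x) (by positivity)
  have h_lim : ∀ᵐ ω ∂P, Tendsto (fun u => F u ω) atTop (nhds (f ω)) := by
    apply ae_of_all
    intro ω
    have := (hpt a ha (ξ₁ ω) (hξ₁nn ω)).mul (hpt b hb (ξ₂ ω) (hξ₂nn ω))
    have hfeq : f ω = (a ^ (-α) * ξ₁ ω ^ α) * (b ^ (-α) * ξ₂ ω ^ α) := by
      rw [hfdef]; ring
    rw [hfeq]
    exact this
  have hmain := tendsto_integral_filter_of_dominated_convergence bound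
    (Eventually.of_forall hFmeas) h_bound hbint h_lim
  have hint_f : ∫ ω, f ω ∂P = a ^ (-α) * b ^ (-α) * ∫ ω, ξ₁ ω ^ α * ξ₂ ω ^ α ∂P := by
    rw [hfdef]
    exact integral_const_mul _ _
  rw [hint_f] at hmain
  refine hmain.congr' ?_
  filter_upwards [eventually_gt_atTop 0] with u hu0
  have e1 : (P {ω | Z₁ ω > u}).toReal = G u := rfl
  have e2 : ∀ ω, F u ω = K (ξ₁ ω) (u * a) * K (ξ₂ ω) (u * b) / G u ^ 2 := by
    intro ω; rw [hFdef]; dsimp only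
    rw [div_mul_div_comm, ← sq]
  rw [e1, hident (u * a) (u * b) (mul_pos hu0 ha) (mul_pos hu0 hb), ← integral_div]
  exact integral_congr_ae (ae_of_all _ e2)
end
end
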